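/- Let r ≥ q ≥ 1 be integers. Color the edges of the complete graph on vertex set {0, 1, …, 2^r - 1} by giving the edge {v, w} the color i ∈ {1, …, r} when the r-digit binary expansions of v and w first differ in the i-th digit (i.e., i is the position, counted from the most significant of r digits, of the highest-order bit in which v and w differ). Then every color class is a bipartite graph, and for every set Q of q colors the union of the color classes of the colors in Q has chromatic number at most 2^q. Consequently, F_χ(r, 2^q + 1, q+1) ≥ 2^r + 1. -/

import Mathlib

open Finset

/-- The graph of the edges of `K_n` colored `a`. -/
def colorGraph {n N : ℕ} (col : Sym2 (Fin n) → Fin N) (a : Fin N) : SimpleGraph (Fin n) :=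
  SimpleGraph.fromRel (fun v w => col s(v, w) = a)

/-- The graph of the edges of `K_n` whose color lies in `Q`. -/
def unionGraph {n N : ℕ} (col : Sym2 (Fin n) → Fin N) (Q : Finset (Fin N)) : SimpleGraph (Fin n) :=
  SimpleGraph.fromRel (fun v w => col s(v, w) ∈ Q)

/-- `Fchi r p q` : the minimum `n` such that every edge-coloring of `K_n` with `r` colors
contains a subgraph of chromatic number at least `p` whose edges receive at most `q - 1`
distinct colors. -/
noncomputable def Fchi (r p q : ℕ) : ℕ :=
  sInf { n : ℕ | ∀ col : Sym2 (Fin n) → Fin r,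
    ∃ Q : Finset (Fin r), Q.card ≤ q - 1 ∧ ¬ (unionGraph col Q).Colorable (p - 1) }

/-- The binary coloring of `K_{2^r}` : the edge `{v, w}` receives the color recording
the position (counted from the most significant of `r` binary digits, `0`-indexed here,
so `0`-indexed position `i` corresponds to the `1`-indexed digit `i+1`) of the
highest-order bit in which `v` and `w` differ. -/
def binCol (r : ℕ) (hr : 0 < r) : Sym2 (Fin (2 ^ r)) → Fin r :=
  Sym2.lift ⟨fun v w => ⟨r - 1 - Nat.log2 (v.val ^^^ w.val), by omega⟩,
    fun v w => by simp [Nat.xor_comm]⟩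

lemma aux_testBit_log2 {x : ℕ} (hx : x ≠ 0) : x.testBit x.log2 = true := by
  have h1 : 2 ^ x.log2 ≤ x := Nat.log2_self_le hx
  have h2 : x < 2 ^ (x.log2 + 1) := Nat.lt_log2_self
  have h3 : x / 2 ^ x.log2 = 1 :=
    Nat.div_eq_of_lt_le (by omega) (by rw [pow_succ] at h2; omega)
  rw [Nat.testBit_eq_decide_div_mod_eq, h3]
  simp

lemma aux_binCol_testBit {r : ℕ} (hr : 0 < r) (v w : Fin (2 ^ r)) (h : v ≠ w) :
    v.val.testBit (r - 1 - (binCol r hr s(v, w)).val)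
      ≠ w.val.testBit (r - 1 - (binCol r hr s(v, w)).val) := by
  set x := v.val ^^^ w.val with hx
  have hx0 : x ≠ 0 := by
    intro hc
    exact h (Fin.ext (xor_eq_zero_iff.mp hc))
  have hxlt : x < 2 ^ r := Nat.xor_lt_two_pow v.isLt w.isLt
  have hlog : x.log2 < r := (Nat.log2_lt hx0).mpr hxlt
  have hval : (binCol r hr s(v, w)).val = r - 1 - x.log2 := rfl
  have hpos : r - 1 - (r - 1 - x.log2) = x.log2 := by omega
  rw [hval, hpos]
  have ht : x.testBit x.log2 = true := aux_testBit_log2 hx0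
  rw [hx, Nat.testBit_xor] at ht
  intro hc
  rw [hc] at ht
  simp at ht
  exact ht rfl

/-- Key: unions of color classes of `binCol` over `Q` are `2 ^ Q.card`-colorable. -/
lemma aux_union_colorable (r : ℕ) (hr : 0 < r) (Q : Finset (Fin r)) :
    (unionGraph (binCol r hr) Q).Colorable (2 ^ Q.card) := by
  have C : (unionGraph (binCol r hr) Q).Coloring ({a // a ∈ Q} → Bool) :=
    SimpleGraph.Coloring.mk
      (fun v => fun i => v.val.testBit (r - 1 - (i : Fin r).val))
      (by
        intro v w hvw
        rw [unionGraph, SimpleGraph.fromRel_adj] at hvw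
        obtain ⟨hne, hcol⟩ := hvw
        have hcol' : binCol r hr s(v, w) ∈ Q := by
          rcases hcol with h | h
          · exact h
          · rwa [Sym2.eq_swap]
        intro hc
        exact aux_binCol_testBit hr v w hne (congrFun hc ⟨_, hcol'⟩))
  have h := C.colorable
  have hcard : Fintype.card ({a // a ∈ Q} → Bool) = 2 ^ Q.card := by
    rw [Fintype.card_fun, Fintype.card_bool, Fintype.card_coe]
  rwa [hcard] at h

/-- Every color class of the binary coloring is bipartite, unions of any `q` color classes
have chromatic number at most `2^q`, and consequently `F_χ(r, 2^q + 1, q + 1) ≥ 2^r + 1`. -/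
theorem stmt14 (q r : ℕ) (hq : 1 ≤ q) (hqr : q ≤ r) :
    (∀ i : Fin r, (colorGraph (binCol r (hq.trans hqr)) i).Colorable 2) ∧
    (∀ Q : Finset (Fin r), Q.card = q →
      (unionGraph (binCol r (hq.trans hqr)) Q).Colorable (2 ^ q)) ∧
    2 ^ r + 1 ≤ Fchi r (2 ^ q + 1) (q + 1) := by
  have hr : 0 < r := hq.trans hqr
  refine ⟨?_, ?_, ?_⟩
  · -- part 1 : each color class bipartite
    intro i
    have C : (colorGraph (binCol r hr) i).Coloring Bool :=
      SimpleGraph.Coloring.mk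
        (fun v => v.val.testBit (r - 1 - i.val))
        (by
          intro v w hvw
          rw [colorGraph, SimpleGraph.fromRel_adj] at hvw
          obtain ⟨hne, hcol⟩ := hvw
          have hcol' : binCol r hr s(v, w) = i := by
            rcases hcol with h | h
            · exact h
            · rwa [Sym2.eq_swap]
          rw [← hcol']
          exact aux_binCol_testBit hr v w hne)
    have h := C.colorable
    rwa [Fintype.card_bool] at h
  · -- part 2
    intro Q hQ
    have h := aux_union_colorable r hr Q
    rwa [hQ] at h
  · -- part 3
    set S := { n : ℕ | ∀ col : Sym2 (Fin n) → Fin r,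
      ∃ Q : Finset (Fin r), Q.card ≤ (q + 1) - 1 ∧
        ¬ (unionGraph col Q).Colorable ((2 ^ q + 1) - 1) } with hS
    -- S is nonempty : N = (2^q)^r + 1 is a member
    have hNmem : (2 ^ q) ^ r + 1 ∈ S := by
      intro col
      by_contra hcon
      push_neg at hcon
      have hsing : ∀ a : Fin r, (unionGraph col {a}).Colorable (2 ^ q) := by
        intro a
        have := hcon {a} (by simp; omega)
        simpa using this
      have C : ∀ a : Fin r, (unionGraph col {a}).Coloring (Fin (2 ^ q)) :=
        fun a => (hsing a).some
      have hinj : Function.Injective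
          (fun v : Fin ((2 ^ q) ^ r + 1) => fun a : Fin r => C a v) := by
        intro v w hvw
        by_contra hne
        have hadj : (unionGraph col {col s(v, w)}).Adj v w := by
          rw [unionGraph, SimpleGraph.fromRel_adj]
          exact ⟨hne, Or.inl (by simp)⟩
        exact (C (col s(v, w))).valid hadj (congrFun hvw (col s(v, w)))
      have hle := Fintype.card_le_of_injective _ hinj
      simp [Fintype.card_fun] at hle
    -- every member of S is at least 2^r + 1
    have hbound : ∀ n ∈ S, 2 ^ r + 1 ≤ n := by
      intro n hn
      by_contra hlt
      push_neg at hlt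
      have hle : n ≤ 2 ^ r := by omega
      -- pull back binCol to Fin n
      set col : Sym2 (Fin n) → Fin r :=
        fun e => binCol r hr (e.map (Fin.castLE hle)) with hcol
      obtain ⟨Q, hQcard, hQbad⟩ := hn col
      apply hQbad
      have hQcard' : Q.card ≤ q := by omega
      obtain ⟨Q', hQQ', hQ'card⟩ := Finset.exists_superset_card_eq hQcard'
        (by simpa using hqr)
      have hbig := aux_union_colorable r hr Q'
      rw [hQ'card] at hbig
      obtain ⟨Cb⟩ := hbig
      have C : (unionGraph col Q).Coloring (Fin (2 ^ q)) :=
        SimpleGraph.Coloring.mk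
          (fun v => Cb (Fin.castLE hle v))
          (by
            intro v w hvw
            rw [unionGraph, SimpleGraph.fromRel_adj] at hvw
            obtain ⟨hne, hmem⟩ := hvw
            have hmem' : col s(v, w) ∈ Q := by
              rcases hmem with h | h
              · exact h
              · rwa [Sym2.eq_swap]
            have hadj : (unionGraph (binCol r hr) Q').Adj
                (Fin.castLE hle v) (Fin.castLE hle w) := by
              rw [unionGraph, SimpleGraph.fromRel_adj]
              refine ⟨fun hc => hne (Fin.castLE_injective hle hc), Or.inl ?_⟩
              have : binCol r hr s(Fin.castLE hle v, Fin.castLE hle w) = col s(v, w) := by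
                simp [hcol, Sym2.map_pair_eq]
              rw [this]
              exact hQQ' hmem'
            exact Cb.valid hadj)
      have h := C.colorable
      simpa using h
    -- conclude
    obtain ⟨n₀, hn₀⟩ : S.Nonempty := ⟨_, hNmem⟩
    have hmem := Nat.sInf_mem (⟨_, hNmem⟩ : S.Nonempty)
    exact hbound _ hmem
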